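/- Let f : ℝⁿ → ℝⁿ and φ : ℝⁿ → ℝ be continuous, let T ⊆ ℝⁿ, and suppose there exist a continuously differentiable V : ℝⁿ → ℝ and a constant U such that f(x)·∇V(x) + φ(x) − U ≤ 0 for all x ∈ T. Then for any bounded solution x(t) of ẋ = f(x) for which there exists t₀ ≥ 0 with x(t) ∈ T for all t ≥ t₀ (and V(x(t)) bounded), limsup_{T→∞} (1/T) ∫₀ᵀ φ(x(t)) dt ≤ U. -/

import Mathlib

open Filter intervalIntegral

/-- local (absorbing-domain) version of the upper bound.
If `f·∇V + φ - U ≤ 0` holds on a set `T` which the bounded trajectory eventually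
enters and never leaves, then `limsup (1/T) ∫₀ᵀ φ(x(t)) dt ≤ U`. -/
theorem time_average_upper_bound_local
    {n : ℕ} (f : (Fin n → ℝ) → (Fin n → ℝ)) (φ : (Fin n → ℝ) → ℝ)
    (T : Set (Fin n → ℝ)) (V : (Fin n → ℝ) → ℝ) (U : ℝ)
    (hf : Continuous f) (hφ : Continuous φ) (hV : ContDiff ℝ 1 V)
    (hineq : ∀ x ∈ T, fderiv ℝ V x (f x) + φ x - U ≤ 0)
    (x : ℝ → (Fin n → ℝ))
    (hsol : ∀ t : ℝ, HasDerivAt x (f (x t)) t)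
    (hbdd : ∃ M : ℝ, ∀ t : ℝ, 0 ≤ t → ‖x t‖ ≤ M ∧ |V (x t)| ≤ M ∧ |φ (x t)| ≤ M)
    (habs : ∃ t₀ : ℝ, 0 ≤ t₀ ∧ ∀ t : ℝ, t₀ ≤ t → x t ∈ T) :
    Filter.limsup (fun S : ℝ => (1 / S) * ∫ t in (0:ℝ)..S, φ (x t)) atTop ≤ U := by
  obtain ⟨M, hM⟩ := hbdd
  obtain ⟨t₀, ht₀, hT⟩ := habs
  have hM0 : 0 ≤ M := le_trans (norm_nonneg _) (hM 0 le_rfl).1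
  have hxcont : Continuous x := continuous_iff_continuousAt.2 fun t => (hsol t).continuousAt
  have hc : Continuous fun s => φ (x s) - U := (hφ.comp hxcont).sub continuous_const
  have hφcont : Continuous fun s => φ (x s) := hφ.comp hxcont
  -- the auxiliary function G
  set G : ℝ → ℝ := fun t => V (x t) + ∫ s in t₀..t, (φ (x s) - U) with hGdef
  have hG : ∀ t : ℝ, HasDerivAt G (fderiv ℝ V (x t) (f (x t)) + (φ (x t) - U)) t := by
    intro t
    have h1 : HasDerivAt (fun t => V (x t)) (fderiv ℝ V (x t) (f (x t))) t :=
      ((hV.differentiable one_ne_zero).differentiableAt.hasFDerivAt).comp_hasDerivAt t (hsol t)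
    have h2 : HasDerivAt (fun u => ∫ s in t₀..u, (φ (x s) - U)) (φ (x t) - U) t :=
      intervalIntegral.integral_hasDerivAt_right (hc.intervalIntegrable _ _)
        (hc.stronglyMeasurableAtFilter _ _) hc.continuousAt
    exact h1.add h2
  have hGanti : AntitoneOn G (Set.Ici t₀) := by
    apply antitoneOn_of_deriv_nonpos (convex_Ici t₀)
      (fun t _ => (hG t).continuousAt.continuousWithinAt)
      (fun t _ => ((hG t).differentiableAt).differentiableWithinAt)
    intro t ht
    rw [interior_Ici] at ht
    rw [(hG t).deriv]
    have := hineq (x t) (hT t (le_of_lt ht))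
    linarith
  -- key integral bound on [t₀, S]
  have hkey : ∀ S : ℝ, t₀ ≤ S → (∫ s in t₀..S, φ (x s)) ≤ U * (S - t₀) + 2 * M := by
    intro S hS
    have h1 : G S ≤ G t₀ := hGanti (Set.self_mem_Ici) hS hS
    have h2 : G t₀ = V (x t₀) := by simp [hGdef]
    have h3 : (∫ s in t₀..S, (φ (x s) - U)) =
        (∫ s in t₀..S, φ (x s)) - U * (S - t₀) := by
      rw [intervalIntegral.integral_sub (hφcont.intervalIntegrable _ _)
        (intervalIntegrable_const), intervalIntegral.integral_const, smul_eq_mul, mul_comm]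
    have h4 : |V (x t₀)| ≤ M := (hM t₀ ht₀).2.1
    have h5 : |V (x S)| ≤ M := (hM S (ht₀.trans hS)).2.1
    have := h1
    rw [h2, hGdef] at this
    simp only at this
    rw [h3] at this
    have h6 : -M ≤ V (x S) := neg_le_of_abs_le h5
    have h7 : V (x t₀) ≤ M := le_of_abs_le h4
    linarith
  -- pointwise bound on the average for S ≥ max t₀ 1
  set C : ℝ := M * t₀ + 2 * M + |U| * t₀ with hCdef
  have hbound : ∀ S : ℝ, max t₀ 1 ≤ S →
      (1 / S) * (∫ t in (0:ℝ)..S, φ (x t)) ≤ U + C / S := by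
    intro S hS
    have hS1 : (1:ℝ) ≤ S := le_trans (le_max_right _ _) hS
    have hSt₀ : t₀ ≤ S := le_trans (le_max_left _ _) hS
    have hSpos : 0 < S := lt_of_lt_of_le one_pos hS1
    have hsplit : (∫ t in (0:ℝ)..S, φ (x t)) =
        (∫ t in (0:ℝ)..t₀, φ (x t)) + ∫ t in t₀..S, φ (x t) :=
      (intervalIntegral.integral_add_adjacent_intervals
        (hφcont.intervalIntegrable _ _) (hφcont.intervalIntegrable _ _)).symm
    have h01 : |∫ t in (0:ℝ)..t₀, φ (x t)| ≤ M * t₀ := by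
      have := intervalIntegral.norm_integral_le_of_norm_le_const
        (C := M) (a := (0:ℝ)) (b := t₀) (f := fun t => φ (x t)) ?_
      · simpa [abs_of_nonneg ht₀] using this
      · intro t ht
        rw [Set.uIoc_of_le ht₀] at ht
        exact (hM t (le_of_lt ht.1)).2.2
    have hint : (∫ t in (0:ℝ)..S, φ (x t)) ≤ C + U * S := by
      have h1 : (∫ t in (0:ℝ)..t₀, φ (x t)) ≤ M * t₀ := le_of_abs_le h01
      have h2 := hkey S hSt₀
      have h3 : -(U * t₀) ≤ |U| * t₀ := by
        rw [← abs_neg, ← neg_mul]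
        exact le_trans (le_abs_self _) (by rw [abs_mul, abs_neg, abs_of_nonneg ht₀])
      rw [hsplit]
      have : U * (S - t₀) = U * S - U * t₀ := by ring
      linarith
    calc (1 / S) * (∫ t in (0:ℝ)..S, φ (x t)) ≤ (1 / S) * (C + U * S) := by
          apply mul_le_mul_of_nonneg_left hint
          positivity
      _ = U + C / S := by field_simp; ring
  -- the comparison function tends to U
  have hv : Tendsto (fun S : ℝ => U + C / S) atTop (nhds U) := by
    have : Tendsto (fun S : ℝ => C / S) atTop (nhds 0) :=
      Tendsto.div_atTop tendsto_const_nhds tendsto_id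
    simpa using tendsto_const_nhds.add this
  have hlow : ∀ᶠ S : ℝ in atTop, -M ≤ (1 / S) * ∫ t in (0:ℝ)..S, φ (x t) := by
    filter_upwards [eventually_ge_atTop (1:ℝ)] with S hS1
    have hSpos : 0 < S := lt_of_lt_of_le one_pos hS1
    have h1 : |∫ t in (0:ℝ)..S, φ (x t)| ≤ M * S := by
      have := intervalIntegral.norm_integral_le_of_norm_le_const
        (C := M) (a := (0:ℝ)) (b := S) (f := fun t => φ (x t)) ?_
      · simpa [abs_of_nonneg hSpos.le] using this
      · intro t ht
        rw [Set.uIoc_of_le hSpos.le] at ht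
        exact (hM t (le_of_lt ht.1)).2.2
    have h2 : -(M * S) ≤ ∫ t in (0:ℝ)..S, φ (x t) := neg_le_of_abs_le h1
    have h3 : (1 / S) * -(M * S) ≤ (1 / S) * ∫ t in (0:ℝ)..S, φ (x t) :=
      mul_le_mul_of_nonneg_left h2 (by positivity)
    calc (-M : ℝ) = (1 / S) * -(M * S) := by field_simp
      _ ≤ _ := h3
  have hcobdd : IsCoboundedUnder (· ≤ ·) atTop
      (fun S : ℝ => (1 / S) * ∫ t in (0:ℝ)..S, φ (x t)) :=
    isCoboundedUnder_le_of_eventually_le atTop hlow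
  have hbdd' : IsBoundedUnder (· ≤ ·) atTop (fun S : ℝ => U + C / S) :=
    hv.isBoundedUnder_le
  calc Filter.limsup (fun S : ℝ => (1 / S) * ∫ t in (0:ℝ)..S, φ (x t)) atTop
      ≤ Filter.limsup (fun S : ℝ => U + C / S) atTop := by
        apply Filter.limsup_le_limsup _ hcobdd hbdd'
        filter_upwards [eventually_ge_atTop (max t₀ 1)] with S hS
        exact hbound S hS
    _ = U := hv.limsup_eq
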